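/- For ℓ with k < ℓ ≤ n-k, the inclusion ι_ℓ : ℝ^n → ℝ^{n+1} inserting a zero in position ℓ+1 is a Poisson map from (ℝ^n, π_k^{(n)}) to (ℝ^{n+1}, π_k^{(n+1)}) onto a Poisson submanifold: for 1 ≤ i < j ≤ n, the reduced bracket {x_i, x_j}_N := {x_i∘p_ℓ, x_j∘p_ℓ}_k^{(n+1)} ∘ ι_ℓ equals ε_{n+i,j+k} x_i x_j = {x_i, x_j}_k^{(n)}. -/

import Mathlib

/-- `ε_{m,ℓ} = 1` if `m > ℓ`, `-1` otherwise. -/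
noncomputable def eps (m l : ℕ) : ℝ := if l < m then 1 else -1

/-- The skew-symmetric Toeplitz matrix `A_k` of size `n`, with
`(A_k)_{i,j} = ε_{n+i,k+j}` for `i < j` (indices 1-based); it defines the diagonal
Poisson structure `π_k^{(n)}` via `{x_i,x_j} = (A_k)_{i,j} x_i x_j`. -/
noncomputable def Amat (n k : ℕ) : Matrix (Fin n) (Fin n) ℝ :=
  fun i j =>
    if i < j then eps (n + i.1 + 1) (k + j.1 + 1)
    else if j < i then -(eps (n + j.1 + 1) (k + i.1 + 1))
    else 0

/-- for `k < ℓ ≤ n-k`, the inclusion `ι_ℓ : ℝ^n → ℝ^{n+1}` inserting a zero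
at (0-based) position `ℓ` (i.e. `Fin.insertNth ℓ 0`) identifies the reduced bracket of the
coordinate functions `x_i ∘ p_ℓ`, `x_j ∘ p_ℓ` (which are the coordinates `y_{ℓ.succAbove i}`,
`y_{ℓ.succAbove j}`) on `(ℝ^{n+1}, π_k^{(n+1)})`, restricted to `ι_ℓ(ℝ^n)`, with the bracket
`{x_i,x_j}_k^{(n)} = ε_{n+i,k+j} x_i x_j` of `π_k^{(n)}`. -/
theorem inclusion_poisson (n k : ℕ) (hk : k ≤ n) (ℓ : Fin (n + 1))
    (hl1 : k < ℓ.1) (hl2 : ℓ.1 ≤ n - k)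
    (i j : Fin n) (hij : i < j) (x : Fin n → ℝ) :
    Amat (n + 1) k (ℓ.succAbove i) (ℓ.succAbove j)
        * (ℓ.insertNth (0 : ℝ) x : Fin (n + 1) → ℝ) (ℓ.succAbove i)
        * (ℓ.insertNth (0 : ℝ) x : Fin (n + 1) → ℝ) (ℓ.succAbove j)
      = Amat n k i j * x i * x j := by
  rw [Fin.insertNth_apply_succAbove, Fin.insertNth_apply_succAbove]
  have hij' : ℓ.succAbove i < ℓ.succAbove j := by
    exact (Fin.succAbove_lt_succAbove_iff).mpr hij
  have hi : i.1 < n := i.2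
  have hj : j.1 < n := j.2
  have hl : ℓ.1 ≤ n := Nat.lt_succ_iff.mp ℓ.2
  have hij2 : i.1 < j.1 := hij
  congr 2
  simp only [Amat, if_pos hij, if_pos hij', eps]
  rcases lt_or_ge (i.1) (ℓ.1) with h1 | h1 <;>
  rcases lt_or_ge (j.1) (ℓ.1) with h2 | h2
  · rw [Fin.succAbove_of_castSucc_lt ℓ i (by simpa [Fin.lt_def] using h1),
        Fin.succAbove_of_castSucc_lt ℓ j (by simpa [Fin.lt_def] using h2)]
    simp only [Fin.coe_castSucc]
    split_ifs <;> first | rfl | omega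
  · rw [Fin.succAbove_of_castSucc_lt ℓ i (by simpa [Fin.lt_def] using h1),
        Fin.succAbove_of_le_castSucc ℓ j (by simpa [Fin.le_def] using h2)]
    simp only [Fin.coe_castSucc, Fin.val_succ]
    split_ifs <;> first | rfl | omega
  · omega
  · rw [Fin.succAbove_of_le_castSucc ℓ i (by simpa [Fin.le_def] using h1),
        Fin.succAbove_of_le_castSucc ℓ j (by simpa [Fin.le_def] using h2)]
    simp only [Fin.val_succ]
    split_ifs <;> first | rfl | omega
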